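/- Let S ∈ ℝ^{n×p} have all entries nonnegative and satisfy the NNA condition: for each i ∈ {1,…,n} there exists a column index j_i such that S_{i,j_i} > 0 and S_{k,j_i} = 0 for all k ≠ i. Then S satisfies Assumption 1 of the paper: for each i ∈ {1,…,n}, S contains n−1 linearly independent columns whose i-th entry is zero (i.e., orthogonal to the unit coordinate vector e_i). Hence NNA is a special case of Assumption 1. -/
import Mathlib


open Matrix

/-- NNA is a special case of Assumption 1: a nonnegative `S` satisfying NNA contains,
for each row index `i`, `n - 1` linearly independent columns whose `i`-th entry is zero. -/
theorem nna_implies_assumption_one {n p : ℕ}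
    (S : Matrix (Fin n) (Fin p) ℝ) (hS : ∀ i j, 0 ≤ S i j)
    (hNNA : ∀ i : Fin n, ∃ j : Fin p, 0 < S i j ∧ ∀ k, k ≠ i → S k j = 0) :
    ∀ i : Fin n, ∃ T : Finset (Fin p), T.card = n - 1 ∧
      LinearIndependent ℝ (fun j : T => Sᵀ (j : Fin p)) ∧
      ∀ j ∈ T, S i j = 0 := by
  intro i
  choose f hfpos hf0 using hNNA
  have hinj : Function.Injective f := by
    intro a b hab
    by_contra hne
    have h1 : S a (f b) = 0 := hf0 b a hne
    rw [← hab] at h1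
    exact absurd h1 (ne_of_gt (hfpos a))
  have hcol : ∀ k : Fin n, Sᵀ (f k) = S k (f k) • (Pi.single k 1 : Fin n → ℝ) := by
    intro k
    funext m
    by_cases hm : m = k
    · subst hm; simp [Matrix.transpose_apply]
    · simp [Matrix.transpose_apply, hf0 k m hm, Pi.single_eq_of_ne hm]
  refine ⟨(Finset.univ.erase i).image f, ?_, ?_, ?_⟩
  · rw [Finset.card_image_of_injective _ hinj, Finset.card_erase_of_mem (Finset.mem_univ i),
      Finset.card_univ, Fintype.card_fin]
  · -- linear independence
    have hbase : LinearIndependent ℝ (fun k : Fin n => (Pi.single k 1 : Fin n → ℝ)) := by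
      have h := (Pi.basisFun ℝ (Fin n)).linearIndependent
      have he : (fun k : Fin n => (Pi.single k 1 : Fin n → ℝ)) = ⇑(Pi.basisFun ℝ (Fin n)) := by
        funext k; simp
      rw [he]; exact h
    have hsub : LinearIndependent ℝ
        (fun k : (Finset.univ.erase i : Finset (Fin n)) =>
          (Pi.single (k : Fin n) 1 : Fin n → ℝ)) :=
      hbase.comp _ Subtype.val_injective
    have hscaled := hsub.units_smul
      (fun k : (Finset.univ.erase i : Finset (Fin n)) =>
        Units.mk0 (S k (f k)) (ne_of_gt (hfpos k)))
    have hfam : LinearIndependent ℝ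
        (fun k : (Finset.univ.erase i : Finset (Fin n)) => Sᵀ (f (k : Fin n))) := by
      convert hscaled using 1
      funext k
      rw [hcol]
      rfl
    -- transfer along the bijection k ↦ f k
    have hgbij : Function.Bijective
        (fun k : (Finset.univ.erase i : Finset (Fin n)) =>
          (⟨f k, Finset.mem_image_of_mem f k.2⟩ :
            ((Finset.univ.erase i).image f : Finset (Fin p)))) := by
      constructor
      · intro a b hab
        apply Subtype.ext
        exact hinj (congrArg Subtype.val hab)
      · rintro ⟨j, hj⟩
        obtain ⟨k, hk, rfl⟩ := Finset.mem_image.mp hj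
        exact ⟨⟨k, hk⟩, rfl⟩
    rw [← linearIndependent_equiv (Equiv.ofBijective _ hgbij)]
    exact hfam
  · intro j hj
    obtain ⟨k, hk, rfl⟩ := Finset.mem_image.mp hj
    exact hf0 k i (Finset.mem_erase.mp hk).1.symm
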